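/- In the polynomial ring ℂ[α,β,γ], the element γ²·(β² − 64) belongs to the ideal I_Q generated by Q¹ = α³ + 5αβ + 4γ − 24α, Q² = α²β + β² + (4/3)αγ + 8α² + 16β + 64, and Q³ = α²γ + βγ + 8γ. (Equivalently, γ²(β² − 64) = 0 in the invariant part of the quantum cohomology ring of the moduli space for genus 3.) -/
import Mathlib


open MvPolynomial

/-- α, β, γ as the three variables of ℂ[α,β,γ]. -/
noncomputable def α : MvPolynomial (Fin 3) ℂ := X 0
noncomputable def β : MvPolynomial (Fin 3) ℂ := X 1
noncomputable def γ : MvPolynomial (Fin 3) ℂ := X 2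

/-- γ²(β² − 64) lies in the ideal of quantum relations
    (α³ + 5αβ + 4γ − 24α, α²β + β² + (4/3)αγ + 8α² + 16β + 64, α²γ + βγ + 8γ). -/
theorem gamma_sq_mul_beta_sq_sub_64_mem_quantum_relations :
    γ ^ 2 * (β ^ 2 - 64) ∈ Ideal.span ({α ^ 3 + 5 * α * β + 4 * γ - 24 * α,
      α ^ 2 * β + β ^ 2 + C ((4 : ℂ) / 3) * (α * γ) + 8 * α ^ 2 + 16 * β + 64,
      α ^ 2 * γ + β * γ + 8 * γ} : Set (MvPolynomial (Fin 3) ℂ)) := by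
  set Q2 : MvPolynomial (Fin 3) ℂ :=
    α ^ 2 * β + β ^ 2 + C ((4 : ℂ) / 3) * (α * γ) + 8 * α ^ 2 + 16 * β + 64 with hQ2def
  set Q3 : MvPolynomial (Fin 3) ℂ := α ^ 2 * γ + β * γ + 8 * γ with hQ3def
  have hQ2 : Q2 ∈ Ideal.span ({α ^ 3 + 5 * α * β + 4 * γ - 24 * α, Q2, Q3} :
      Set (MvPolynomial (Fin 3) ℂ)) := Ideal.subset_span (by simp)
  have hQ3 : Q3 ∈ Ideal.span ({α ^ 3 + 5 * α * β + 4 * γ - 24 * α, Q2, Q3} :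
      Set (MvPolynomial (Fin 3) ℂ)) := Ideal.subset_span (by simp)
  have hu : (C ((4 : ℂ) / 3) : MvPolynomial (Fin 3) ℂ) * 3 = 4 := by
    rw [show ((3 : MvPolynomial (Fin 3) ℂ)) = C (3 : ℂ) from (map_ofNat C 3).symm,
        show ((4 : MvPolynomial (Fin 3) ℂ)) = C (4 : ℂ) from (map_ofNat C 4).symm, ← C_mul]
    norm_num
  have key : (4 : MvPolynomial (Fin 3) ℂ) * (γ ^ 2 * (β ^ 2 - 64)) =
      (-3 * α * β * γ + 24 * α * γ) * Q2 +
      (3 * α * β ^ 2 - 192 * α + 4 * β * γ - 32 * γ) * Q3 := by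
    rw [hQ2def, hQ3def]
    linear_combination (α * β * γ - 8 * α * γ) * α * γ * hu
  have h4 : γ ^ 2 * (β ^ 2 - 64) =
      C ((1 : ℂ) / 4) * ((4 : MvPolynomial (Fin 3) ℂ) * (γ ^ 2 * (β ^ 2 - 64))) := by
    rw [show ((4 : MvPolynomial (Fin 3) ℂ)) = C (4 : ℂ) from (map_ofNat C 4).symm, ← mul_assoc, ← C_mul]
    norm_num
  rw [h4, key]
  exact Ideal.mul_mem_left _ _
    (Ideal.add_mem _ (Ideal.mul_mem_left _ _ hQ2) (Ideal.mul_mem_left _ _ hQ3))
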